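/- Let d ≥ 1 and K ≥ 1 be integers, let λ > 0 and c > 0 be reals, and let φ₁,…,φ_K ∈ ℝ^d satisfy ‖φ_k‖₂ ≤ 1 for all k. Define V_k = λ·I_d + Σ_{i=1}^{k−1} φ_i φ_iᵀ for k = 1,…,K+1. If φ_kᵀ V_k^{−1} φ_k ≥ c for every k ∈ {1,…,K}, then (1 + c)^{K/d} ≤ 1 + K/(d·λ). -/

import Mathlib

open Matrix

lemma aux_vecMulVec_posSemidef {d : ℕ} (u : Fin d → ℝ) :
    (Matrix.vecMulVec u u).PosSemidef := by
  refine .of_dotProduct_mulVec_nonneg ?_ ?_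
  · ext i j
    simp [Matrix.conjTranspose_apply, Matrix.vecMulVec_apply, mul_comm]
  · intro x
    have h : (Matrix.vecMulVec u u) *ᵥ x = (u ⬝ᵥ x) • u := by
      ext i
      simp [Matrix.mulVec, dotProduct, Matrix.vecMulVec_apply, Finset.mul_sum,
        mul_assoc, mul_comm, mul_left_comm]
    rw [h]
    have h2 : star x ⬝ᵥ ((u ⬝ᵥ x) • u) = (u ⬝ᵥ x) * (x ⬝ᵥ u) := by
      simp [dotProduct_smul, star_trivial]
    rw [h2, dotProduct_comm]
    exact mul_self_nonneg _

lemma aux_det_lemma {d : ℕ} (A : Matrix (Fin d) (Fin d) ℝ) (hA : IsUnit A.det)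
    (u : Fin d → ℝ) :
    (A + Matrix.vecMulVec u u).det = A.det * (1 + u ⬝ᵥ A⁻¹ *ᵥ u) := by
  rw [Matrix.vecMulVec_eq (Fin 1), Matrix.det_add_replicateCol_mul_replicateRow hA]
  congr 1
  calc (1 + replicateRow (Fin 1) u * A⁻¹ * replicateCol (Fin 1) u).det
      = ((1 + replicateRow (Fin 1) u * A⁻¹ * replicateCol (Fin 1) u) : Matrix (Fin 1) (Fin 1) ℝ) 0 0 := by
        apply Matrix.det_fin_one
    _ = 1 + u ⬝ᵥ A⁻¹ *ᵥ u := by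
        simp only [Matrix.add_apply, Matrix.one_apply_eq, Matrix.mul_apply, Matrix.replicateRow_apply,
          Matrix.replicateCol_apply, dotProduct, Matrix.mulVec, Finset.mul_sum, Finset.sum_mul]
        congr 1
        rw [Finset.sum_comm]
        refine Finset.sum_congr rfl fun i _ => Finset.sum_congr rfl fun j _ => by ring

/-- AM-GM for determinant and trace of a positive definite real matrix. -/
lemma aux_det_le_trace {d : ℕ} (hd : 1 ≤ d) (A : Matrix (Fin d) (Fin d) ℝ)
    (hA : A.PosDef) : A.det ≤ (A.trace / d) ^ d := by
  have hd0 : (d : ℝ) ≠ 0 := by positivity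
  have hH : A.IsHermitian := hA.isHermitian
  set μ : Fin d → ℝ := hH.eigenvalues with hμ
  have hμ0 : ∀ i, 0 ≤ μ i := hA.posSemidef.eigenvalues_nonneg
  have hdet : A.det = ∏ i, μ i := by
    have := hH.det_eq_prod_eigenvalues
    simpa using this
  have htr : A.trace = ∑ i, μ i := by
    rw [hH.trace_eq_sum_eigenvalues]
    simp [hμ]
  have hgm : ∏ i, μ i ^ ((d : ℝ)⁻¹) ≤ ∑ i, (d : ℝ)⁻¹ * μ i := by
    refine Real.geom_mean_le_arith_mean_weighted Finset.univ _ _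
      (fun i _ => by positivity) ?_ (fun i _ => hμ0 i)
    simp [Finset.sum_const, Finset.card_univ, mul_inv_cancel₀ hd0]
  have hprod : ∏ i, μ i = (∏ i, μ i ^ ((d : ℝ)⁻¹)) ^ d := by
    rw [← Finset.prod_pow]
    refine Finset.prod_congr rfl fun i _ => ?_
    rw [← Real.rpow_natCast (μ i ^ ((d : ℝ)⁻¹)) d, ← Real.rpow_mul (hμ0 i),
      inv_mul_cancel₀ hd0, Real.rpow_one]
  rw [hdet, htr, hprod]
  have hsum : ∑ i, (d : ℝ)⁻¹ * μ i = (∑ i, μ i) / d := by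
    rw [← Finset.mul_sum]; ring
  refine pow_le_pow_left₀ ?_ ?_ d
  · exact Finset.prod_nonneg fun i _ => Real.rpow_nonneg (hμ0 i) _
  · rw [← hsum]; exact hgm

/-- Let `d, K ≥ 1`, `λ > 0`, `c > 0`, and `φ₁,…,φ_K ∈ ℝ^d` with `‖φ_k‖₂ ≤ 1`.
Define `V_k = λ·I_d + ∑_{i=1}^{k−1} φ_i φ_iᵀ`. If `φ_kᵀ V_k⁻¹ φ_k ≥ c` for every
`k ∈ {1,…,K}`, then `(1 + c)^{K/d} ≤ 1 + K/(d·λ)`. -/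
theorem stmt17 (d K : ℕ) (hd : 1 ≤ d) (hK : 1 ≤ K)
    (lam c : ℝ) (hlam : 0 < lam) (hc : 0 < c)
    (φ : ℕ → Fin d → ℝ)
    (hφ : ∀ k ∈ Finset.Icc 1 K, Real.sqrt (∑ j, (φ k j) ^ 2) ≤ 1)
    (V : ℕ → Matrix (Fin d) (Fin d) ℝ)
    (hV : ∀ k, V k = lam • (1 : Matrix (Fin d) (Fin d) ℝ)
      + ∑ i ∈ Finset.Icc 1 (k - 1), Matrix.vecMulVec (φ i) (φ i))
    (hlb : ∀ k ∈ Finset.Icc 1 K, c ≤ φ k ⬝ᵥ (V k)⁻¹.mulVec (φ k)) :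
    (1 + c) ^ ((K : ℝ) / (d : ℝ)) ≤ 1 + (K : ℝ) / ((d : ℝ) * lam) := by
  have hd0 : (0 : ℝ) < d := by exact_mod_cast hd
  -- positive definiteness
  have hVpos : ∀ k, (V k).PosDef := by
    intro k
    rw [hV k]
    refine Matrix.PosDef.add_posSemidef ?_ ?_
    · rw [Matrix.smul_one_eq_diagonal]
      exact Matrix.PosDef.diagonal fun _ => hlam
    · exact Finset.sum_induction _ _ (fun a b ha hb => ha.add hb) Matrix.PosSemidef.zero
        (fun i _ => aux_vecMulVec_posSemidef (φ i))
  -- recursion for the matrices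
  have hrec : ∀ m : ℕ, V (m + 2) = V (m + 1) + Matrix.vecMulVec (φ (m + 1)) (φ (m + 1)) := by
    intro m
    rw [hV (m + 2), hV (m + 1)]
    simp only [show m + 2 - 1 = m + 1 from rfl, show m + 1 - 1 = m from rfl]
    rw [Finset.sum_Icc_succ_top (by omega : 1 ≤ m + 1), add_assoc]
  -- determinant recursion
  have hdetrec : ∀ m : ℕ,
      (V (m + 2)).det = (V (m + 1)).det * (1 + φ (m + 1) ⬝ᵥ (V (m + 1))⁻¹ *ᵥ φ (m + 1)) := by
    intro m
    rw [hrec m]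
    exact aux_det_lemma _ (isUnit_iff_ne_zero.mpr (hVpos (m + 1)).det_pos.ne') _
  -- lower bound by induction
  have hlow : ∀ m : ℕ, m ≤ K → lam ^ d * (1 + c) ^ m ≤ (V (m + 1)).det := by
    intro m
    induction m with
    | zero =>
      intro _
      have h1 : V 1 = lam • (1 : Matrix (Fin d) (Fin d) ℝ) := by
        rw [hV 1]; simp
      rw [h1, Matrix.det_smul, Matrix.det_one]
      simp
    | succ m ih =>
      intro hmK
      have hmem : m + 1 ∈ Finset.Icc 1 K := by
        simp only [Finset.mem_Icc]; omega
      have hquad := hlb (m + 1) hmem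
      have hdetpos : (0 : ℝ) < (V (m + 1)).det := (hVpos (m + 1)).det_pos
      rw [hdetrec m]
      calc lam ^ d * (1 + c) ^ (m + 1) = (lam ^ d * (1 + c) ^ m) * (1 + c) := by ring
        _ ≤ (V (m + 1)).det * (1 + φ (m + 1) ⬝ᵥ (V (m + 1))⁻¹ *ᵥ φ (m + 1)) := by
            refine mul_le_mul (ih (by omega)) (by linarith) (by positivity) hdetpos.le
  -- trace bound
  have htr : (V (K + 1)).trace ≤ d * lam + K := by
    rw [hV (K + 1)]
    simp only [Nat.add_sub_cancel]
    rw [Matrix.trace_add, Matrix.trace_smul, Matrix.trace_one, Matrix.trace_sum]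
    have hbd : ∀ i ∈ Finset.Icc 1 K, (Matrix.vecMulVec (φ i) (φ i)).trace ≤ 1 := by
      intro i hi
      have h1 := hφ i hi
      have h2 : (0 : ℝ) ≤ ∑ j, (φ i j) ^ 2 := by positivity
      have h3 : ∑ j, (φ i j) ^ 2 ≤ 1 := by
        nlinarith [Real.sq_sqrt h2, Real.sqrt_nonneg (∑ j, (φ i j) ^ 2)]
      have h4 : (Matrix.vecMulVec (φ i) (φ i)).trace = ∑ j, (φ i j) ^ 2 := by
        simp [Matrix.trace, Matrix.diag, Matrix.vecMulVec_apply, sq]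
      rw [h4]; exact h3
    have h5 : ∑ i ∈ Finset.Icc 1 K, (Matrix.vecMulVec (φ i) (φ i)).trace
        ≤ ∑ i ∈ Finset.Icc 1 K, (1 : ℝ) := Finset.sum_le_sum hbd
    have h6 : ∑ i ∈ Finset.Icc 1 K, (1 : ℝ) = K := by
      simp [Nat.card_Icc]
    have h7 : lam • (Fintype.card (Fin d) : ℝ) = d * lam := by
      simp [Fintype.card_fin, mul_comm]
    rw [h7]
    linarith [h5.trans_eq h6]
  -- combine: (1+c)^K ≤ (1 + K/(d*lam))^d
  have htrpos : (0 : ℝ) ≤ (V (K + 1)).trace / d := by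
    have h8 : (0 : ℝ) < (V (K + 1)).trace := by
      rw [hV (K + 1), Matrix.trace_add, Matrix.trace_smul, Matrix.trace_one, Matrix.trace_sum]
      have h1 : (0 : ℝ) ≤ ∑ i ∈ Finset.Icc 1 (K + 1 - 1), (Matrix.vecMulVec (φ i) (φ i)).trace := by
        refine Finset.sum_nonneg fun i _ => ?_
        simp only [Matrix.trace, Matrix.diag_apply, Matrix.vecMulVec_apply]
        exact Finset.sum_nonneg fun j _ => mul_self_nonneg _
      have h2 : (0 : ℝ) < lam • (Fintype.card (Fin d) : ℝ) := by
        simp only [Fintype.card_fin, smul_eq_mul]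
        positivity
      linarith
    positivity
  have hkey : lam ^ d * (1 + c) ^ K ≤ (lam + K / d) ^ d := by
    refine (hlow K le_rfl).trans ((aux_det_le_trace hd _ (hVpos (K + 1))).trans ?_)
    refine pow_le_pow_left₀ htrpos ?_ d
    rw [div_le_iff₀ hd0]
    calc (V (K + 1)).trace ≤ d * lam + K := htr
      _ = (lam + K / d) * d := by field_simp
  have h3 : (1 + c) ^ K ≤ (1 + (K : ℝ) / (d * lam)) ^ d := by
    have heq : (1 : ℝ) + (K : ℝ) / (d * lam) = (lam + K / d) / lam := by
      field_simp
    rw [heq, div_pow, le_div_iff₀ (by positivity)]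
    calc (1 + c) ^ K * lam ^ d = lam ^ d * (1 + c) ^ K := by ring
      _ ≤ (lam + K / d) ^ d := hkey
  -- take d-th roots
  have h1c : (0 : ℝ) ≤ 1 + c := by linarith
  have hrhs : (0 : ℝ) ≤ 1 + (K : ℝ) / (d * lam) := by positivity
  have hdne : (d : ℝ) ≠ 0 := hd0.ne'
  calc (1 + c) ^ ((K : ℝ) / (d : ℝ))
      = ((1 + c) ^ (K : ℕ)) ^ ((d : ℝ)⁻¹) := by
        rw [← Real.rpow_natCast (1 + c) K, ← Real.rpow_mul h1c, div_eq_mul_inv]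
    _ ≤ ((1 + (K : ℝ) / (d * lam)) ^ (d : ℕ)) ^ ((d : ℝ)⁻¹) := by
        refine Real.rpow_le_rpow (by positivity) h3 (by positivity)
    _ = 1 + (K : ℝ) / (d * lam) := by
        rw [← Real.rpow_natCast (1 + (K : ℝ) / (d * lam)) d, ← Real.rpow_mul hrhs,
          mul_inv_cancel₀ hdne, Real.rpow_one]
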